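/- Let P be a real-linear map on the real vector space of n×n complex Hermitian matrices that is positive (P maps positive-semidefinite matrices to positive-semidefinite matrices) and unital (P(I) = I), and suppose there exists a positive definite Hermitian matrix ρ such that tr(P(y)ρ) = tr(yρ) for all Hermitian y. Then P(x²) = x² for every Hermitian matrix x with P(x) = x. -/

import Mathlib

open scoped ComplexOrder

open Matrix

lemma trace_conjTranspose_mul_self_eq_zero' {m : ℕ} {M : Matrix (Fin m) (Fin m) ℂ}
    (h : (Mᴴ * M).trace = 0) : M = 0 := by
  have hdiag : ∀ j, (Mᴴ * M) j j = ∑ i, star (M i j) * M i j := by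
    intro j
    simp [Matrix.mul_apply, Matrix.conjTranspose_apply]
  have h0 : ∑ j, ∑ i, star (M i j) * M i j = 0 := by
    rw [← h]; simp [Matrix.trace, Matrix.diag, hdiag]
  ext i j
  have h1 := (Finset.sum_eq_zero_iff_of_nonneg
    (fun j _ => Finset.sum_nonneg (fun i _ => star_mul_self_nonneg (M i j)))).mp h0 j
    (Finset.mem_univ j)
  have h2 := (Finset.sum_eq_zero_iff_of_nonneg
    (fun i _ => star_mul_self_nonneg (M i j))).mp h1 i (Finset.mem_univ i)
  have : M i j = 0 := by
    simpa [Complex.star_def, Complex.mul_conj', mul_comm] using h2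
  simpa using this

open scoped MatrixOrder in
/-- psd matrix with `tr(Aρ) = 0` for posdef `ρ` is zero. -/
lemma psd_trace_mul_posdef_eq_zero {m : ℕ} {A ρ : Matrix (Fin m) (Fin m) ℂ}
    (hA : A.PosSemidef) (hρ : ρ.PosDef) (h : (A * ρ).trace = 0) : A = 0 := by
  set S := CFC.sqrt A with hS
  set T := CFC.sqrt ρ with hT
  have hSS : S * S = A := CFC.sqrt_mul_sqrt_self A hA.nonneg
  have hTT : T * T = ρ := CFC.sqrt_mul_sqrt_self ρ hρ.posSemidef.nonneg
  have hSh : Sᴴ = S := (CFC.sqrt_nonneg A).posSemidef.isHermitian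
  have hTh : Tᴴ = T := (CFC.sqrt_nonneg ρ).posSemidef.isHermitian
  have key : ((S * T)ᴴ * (S * T)).trace = 0 := by
    have : (S * T)ᴴ * (S * T) = T * (S * S * T) := by
      rw [conjTranspose_mul, hSh, hTh, mul_assoc, mul_assoc]
    rw [this, trace_mul_comm, mul_assoc, hSS, hTT, h]
  have hST : S * T = 0 := trace_conjTranspose_mul_self_eq_zero' key
  have hTunit : IsUnit T.det := by
    have : T.det * T.det = ρ.det := by rw [← det_mul, hTT]
    have hρdet : ρ.det ≠ 0 := hρ.det_pos.ne'
    have : T.det ≠ 0 := fun h0 => hρdet (by rw [← this, h0, mul_zero])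
    exact this.isUnit
  have hS0 : S = 0 := by
    have := congrArg (· * T⁻¹) hST
    simpa [mul_assoc, Matrix.mul_nonsing_inv T hTunit] using this
  rw [← hSS, hS0, mul_zero]


/-- Let `P` be a real-linear map on the real vector space of `n × n`
complex Hermitian matrices (realized as a real-linear map on all matrices sending
Hermitian matrices to Hermitian matrices) that is positive and unital, and suppose
there is a positive definite Hermitian matrix `ρ` with `tr(P(y)ρ) = tr(yρ)` for all
Hermitian `y`.  Then `P(x²) = x²` for every Hermitian `x` with `P(x) = x`. -/
theorem fixed_point_square (n : ℕ)
    (P : Matrix (Fin n) (Fin n) ℂ →ₗ[ℝ] Matrix (Fin n) (Fin n) ℂ)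
    (hherm : ∀ x : Matrix (Fin n) (Fin n) ℂ, x.IsHermitian → (P x).IsHermitian)
    (hpos : ∀ x : Matrix (Fin n) (Fin n) ℂ, x.PosSemidef → (P x).PosSemidef)
    (hunital : P 1 = 1)
    (ρ : Matrix (Fin n) (Fin n) ℂ) (hρ : ρ.PosDef)
    (htr : ∀ y : Matrix (Fin n) (Fin n) ℂ, y.IsHermitian →
      (P y * ρ).trace = (y * ρ).trace) :
    ∀ x : Matrix (Fin n) (Fin n) ℂ, x.IsHermitian → P x = x → P (x * x) = x * x := by
  intro x hx hfix
  set U : Matrix (Fin n) (Fin n) ℂ := (hx.eigenvectorUnitary : Matrix (Fin n) (Fin n) ℂ) with hU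
  set lam : Fin n → ℝ := hx.eigenvalues with hlam
  have hUU : star U * U = 1 := Unitary.coe_star_mul_self hx.eigenvectorUnitary
  have hUU' : U * star U = 1 := Unitary.coe_mul_star_self hx.eigenvectorUnitary
  -- spectral projections
  set p : Fin n → Matrix (Fin n) (Fin n) ℂ :=
    fun k => U * Matrix.diagonal (fun i => ((Pi.single k (1:ℝ) : Fin n → ℝ) i : ℂ)) * star U
    with hp
  -- generic decomposition of U * diagonal f * U*
  have hdecomp : ∀ f : Fin n → ℝ,
      U * Matrix.diagonal (fun i => ((f i : ℝ) : ℂ)) * star U = ∑ k, f k • p k := by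
    intro f
    have h1 : (fun i => ((f i : ℝ) : ℂ)) = ∑ k, (f k : ℝ) • (fun i => ((Pi.single k (1:ℝ) : Fin n → ℝ) i : ℂ)) := by
      funext i
      simp [Finset.sum_apply, Pi.single_apply, apply_ite, mul_comm]
    rw [h1, show Matrix.diagonal (∑ k : Fin n, f k • fun i => ((Pi.single k (1:ℝ) : Fin n → ℝ) i : ℂ))
        = ∑ k : Fin n, f k • Matrix.diagonal (fun i => ((Pi.single k (1:ℝ) : Fin n → ℝ) i : ℂ)) by
      ext i j
      by_cases hij : i = j <;>
        simp [Matrix.diagonal_apply, hij, Finset.sum_apply, Matrix.sum_apply,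
          Matrix.smul_apply, Pi.single_apply, apply_ite, Complex.real_smul]]
    rw [Finset.mul_sum, Finset.sum_mul]
    exact Finset.sum_congr rfl fun k _ => by
      rw [hp]; simp [Matrix.mul_smul, Matrix.smul_mul]
  -- the projections are psd
  have hppsd : ∀ k, (p k).PosSemidef := by
    intro k
    rw [hp]
    have hd : (Matrix.diagonal (fun i => ((Pi.single k (1:ℝ) : Fin n → ℝ) i : ℂ))).PosSemidef := by
      refine Matrix.PosSemidef.diagonal ?_
      intro i
      by_cases hik : i = k <;> simp [Pi.single_apply, hik]
    simpa [Matrix.star_eq_conjTranspose] using hd.mul_mul_conjTranspose_same U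
  -- sum of projections is 1
  have hpsum : ∑ k, p k = 1 := by
    have := hdecomp (fun _ => (1:ℝ))
    simpa [Matrix.diagonal_one, hUU'] using this.symm
  -- spectral decomposition of x
  have hxd : x = ∑ k, lam k • p k := by
    have := hx.spectral_theorem
    rw [this]
    exact hdecomp lam
  -- spectral decomposition of x * x
  have hx2d : x * x = ∑ k, (lam k ^ 2) • p k := by
    have hsq : x * x = U * Matrix.diagonal (fun i => ((lam i ^ 2 : ℝ) : ℂ)) * star U := by
      conv_lhs => rw [hx.spectral_theorem]
      simp only [Unitary.conjStarAlgAut_apply, Unitary.coe_star]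
      rw [← hU, ← hlam]
      rw [show ∀ (D : Matrix (Fin n) (Fin n) ℂ),
        (U * D * star U) * (U * D * star U) = U * (D * D) * star U from ?_]
      · rw [Matrix.diagonal_mul_diagonal]
        congr 1
        congr 1
        funext i
        simp [Function.comp, pow_two]
      · intro D
        calc (U * D * star U) * (U * D * star U)
            = U * D * (star U * U) * D * star U := by simp only [mul_assoc]
          _ = U * (D * D) * star U := by rw [hUU]; simp only [mul_assoc, mul_one, one_mul]
    rw [hsq]
    exact hdecomp (fun k => lam k ^ 2)
  -- images of the projections
  set a : Fin n → Matrix (Fin n) (Fin n) ℂ := fun k => P (p k) with ha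
  have hasum : ∑ k, a k = 1 := by
    rw [ha, ← map_sum P p Finset.univ, hpsum, hunital]
  have hPx : ∑ k, lam k • a k = x := by
    have : P x = ∑ k, lam k • a k := by
      rw [hxd, map_sum]
      exact Finset.sum_congr rfl fun k _ => P.map_smul _ _
    rw [← this, hfix]
  have hPx2 : P (x * x) = ∑ k, (lam k ^ 2) • a k := by
    rw [hx2d, map_sum]
    exact Finset.sum_congr rfl fun k _ => P.map_smul _ _
  have hrs : ∀ (r : ℝ) (M : Matrix (Fin n) (Fin n) ℂ), r • M = (r : ℂ) • M :=
    fun r M => RCLike.real_smul_eq_coe_smul (K := ℂ) r M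
  have hPx' : ∑ k, ((lam k : ℂ)) • a k = x := by
    rw [← hPx]; exact Finset.sum_congr rfl fun k _ => (hrs _ _).symm
  have hPx2' : P (x * x) = ∑ k, ((lam k : ℂ))^2 • a k := by
    rw [hPx2]
    refine Finset.sum_congr rfl fun k _ => ?_
    rw [hrs]; norm_cast
  -- the key Kadison-type identity
  set C : Fin n → Matrix (Fin n) (Fin n) ℂ := fun k => ((lam k : ℂ) • 1 - x) with hC
  have hCherm : ∀ k, (C k)ᴴ = C k := by
    intro k
    rw [hC]
    simp [Matrix.conjTranspose_smul, hx.eq, Complex.star_def, Complex.conj_ofReal]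
  have hkey : P (x * x) - x * x = ∑ k, C k * a k * C k := by
    have hterm : ∀ k, C k * a k * C k
        = ((lam k : ℂ))^2 • a k - (lam k : ℂ) • (x * a k) - (lam k : ℂ) • (a k * x)
          + x * a k * x := by
      intro k
      rw [hC]
      simp only [Matrix.sub_mul, Matrix.mul_sub, smul_mul_assoc, mul_smul_comm,
        one_mul, mul_one, smul_smul, smul_sub, sq]
      abel
    rw [Finset.sum_congr rfl fun k _ => hterm k]
    rw [Finset.sum_add_distrib, Finset.sum_sub_distrib, Finset.sum_sub_distrib]
    have h1 : ∑ k, (lam k : ℂ) • (x * a k) = x * x := by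
      calc ∑ k, (lam k : ℂ) • (x * a k) = x * ∑ k, (lam k : ℂ) • a k := by
            rw [Finset.mul_sum]
            exact Finset.sum_congr rfl fun k _ => (mul_smul_comm _ _ _).symm
        _ = x * x := by rw [hPx']
    have h2 : ∑ k, (lam k : ℂ) • (a k * x) = x * x := by
      calc ∑ k, (lam k : ℂ) • (a k * x) = (∑ k, (lam k : ℂ) • a k) * x := by
            rw [Finset.sum_mul]
            exact Finset.sum_congr rfl fun k _ => (smul_mul_assoc _ _ _).symm
        _ = x * x := by rw [hPx']
    have h3 : ∑ k, x * a k * x = x * x := by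
      calc ∑ k, x * a k * x = x * (∑ k, a k) * x := by
            rw [Finset.mul_sum, Finset.sum_mul]
        _ = x * x := by rw [hasum, mul_one]
    rw [h1, h2, h3, ← hPx2']
    abel
  -- the difference is positive semidefinite
  have hApsd : (P (x * x) - x * x).PosSemidef := by
    rw [hkey]
    refine Finset.sum_induction _ Matrix.PosSemidef
      (fun u v hu hv => hu.add hv) Matrix.PosSemidef.zero (fun k _ => ?_)
    have := ((hpos _ (hppsd k)).mul_mul_conjTranspose_same (C k))
    rwa [hCherm k] at this
  -- its ρ-trace vanishes
  have hx2herm : (x * x).IsHermitian := by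
    unfold Matrix.IsHermitian
    rw [Matrix.conjTranspose_mul, hx.eq]
  have htr0 : ((P (x * x) - x * x) * ρ).trace = 0 := by
    rw [Matrix.sub_mul, Matrix.trace_sub, htr (x * x) hx2herm, sub_self]
  have := psd_trace_mul_posdef_eq_zero hApsd hρ htr0
  exact sub_eq_zero.mp this
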